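/- Let γ > 1 be a real number and let V be a set of labelled vertices, each vertex v carrying a position in ℝ², with D(u,v) the ℓ1 distance between the positions of u and v. For i = 1,…,m let P_i be a simple alternating path given by pairwise distinct vertices r^i_1, s^i_1, …, r^i_{ℓ_i}, s^i_{ℓ_i} of V, with edge set E_i = { {r^i_k, s^i_k} : 1 ≤ k ≤ ℓ_i } ∪ { {s^i_k, r^i_{k+1}} : 1 ≤ k ≤ ℓ_i − 1 } (unordered pairs of vertices). Define M₀ = ∅ and M_i = M_{i−1} Δ E_i, and assume each P_i is M_{i−1}-augmenting: {r^i_k, s^i_k} ∉ M_{i−1} for all 1 ≤ k ≤ ℓ_i and {s^i_k, r^i_{k+1}} ∈ M_{i−1} for all 1 ≤ k ≤ ℓ_i − 1. Let φ_i = γ·Σ_{k=1}^{ℓ_i} D(r^i_k, s^i_k) − Σ_{k=1}^{ℓ_i−1} D(s^i_k, r^i_{k+1}) be the γ-net-cost of P_i. Then the total TA-plane distance of the online matching, which matches the two endpoints of each path, satisfies Σ_{i=1}^{m} D(r^i_1, s^i_{ℓ_i}) ≤ (2/(γ−1)) · Σ_{i=1}^{m} φ_i. -/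

import Mathlib

open Finset

/-- ℓ1 distance in the time-augmented (TA) plane. -/
def taDist (p q : ℝ × ℝ) : ℝ := |p.1 - q.1| + |p.2 - q.2|

lemma taDist_nonneg (p q : ℝ × ℝ) : 0 ≤ taDist p q := by
  unfold taDist; positivity
lemma taDist_comm (p q : ℝ × ℝ) : taDist p q = taDist q p := by
  unfold taDist; rw [abs_sub_comm, abs_sub_comm p.2]
lemma taDist_triangle (p q r : ℝ × ℝ) : taDist p r ≤ taDist p q + taDist q r := by
  unfold taDist
  have h1 := abs_sub_le p.1 q.1 r.1
  have h2 := abs_sub_le p.2 q.2 r.2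
  linarith
lemma path_tri (a b : ℕ → ℝ × ℝ) (n : ℕ) :
    taDist (a 0) (b n) ≤ ∑ k ∈ range (n+1), taDist (a k) (b k)
      + ∑ k ∈ range n, taDist (b k) (a (k+1)) := by
  induction n with
  | zero => simp
  | succ n ih =>
    rw [sum_range_succ _ (n+1), sum_range_succ (fun k => taDist (b k) (a (k+1)))]
    have h1 := taDist_triangle (a 0) (b n) (a (n+1))
    have h2 := taDist_triangle (a 0) (a (n+1)) (b (n+1))
    linarith
noncomputable def symW {V : Type*} (pos : V → ℝ × ℝ) : Sym2 V → ℝ :=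
  Sym2.lift ⟨fun u v => taDist (pos u) (pos v), fun _ _ => taDist_comm _ _⟩
lemma symW_nonneg {V : Type*} (pos : V → ℝ × ℝ) (e : Sym2 V) : 0 ≤ symW pos e := by
  induction e using Sym2.ind with
  | _ a b => exact taDist_nonneg _ _


/-- Lemma 3.1 (DUB): the total TA-plane distance of the online matching (which
matches the two endpoints of each augmenting path `P_i`) is at most
`2/(γ-1)` times the total γ-net-cost of the augmenting paths, where the offline
matching starts empty and is augmented along each path in turn. -/
theorem online_matching_dist_le (γ : ℝ) (hγ : 1 < γ)
    {V : Type*} [DecidableEq V] (pos : V → ℝ × ℝ)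
    (m : ℕ) (ℓ : ℕ → ℕ) (hℓ : ∀ i < m, 1 ≤ ℓ i)
    (rq sv : ℕ → ℕ → V)
    (hdist : ∀ i < m, ∀ k < ℓ i, ∀ k' < ℓ i,
      (rq i k = rq i k' → k = k') ∧ (sv i k = sv i k' → k = k') ∧
        rq i k ≠ sv i k')
    (E : ℕ → Finset (Sym2 V))
    (hE : ∀ i < m, E i =
        ((range (ℓ i)).image fun k => Sym2.mk (rq i k) (sv i k)) ∪
        ((range (ℓ i - 1)).image fun k => Sym2.mk (sv i k) (rq i (k + 1))))
    (M : ℕ → Finset (Sym2 V)) (hM0 : M 0 = ∅)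
    (hM : ∀ i < m, M (i + 1) = (M i \ E i) ∪ (E i \ M i))
    (haug1 : ∀ i < m, ∀ k < ℓ i, Sym2.mk (rq i k) (sv i k) ∉ M i)
    (haug2 : ∀ i < m, ∀ k, k + 1 < ℓ i → Sym2.mk (sv i k) (rq i (k + 1)) ∈ M i) :
    ∑ i ∈ range m, taDist (pos (rq i 0)) (pos (sv i (ℓ i - 1)))
      ≤ (2 / (γ - 1)) * ∑ i ∈ range m,
          (γ * ∑ k ∈ range (ℓ i), taDist (pos (rq i k)) (pos (sv i k))
            - ∑ k ∈ range (ℓ i - 1),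
                taDist (pos (sv i k)) (pos (rq i (k + 1)))) := by
  set A : ℕ → ℝ := fun i => ∑ k ∈ range (ℓ i), taDist (pos (rq i k)) (pos (sv i k)) with hA
  set B : ℕ → ℝ := fun i => ∑ k ∈ range (ℓ i - 1),
      taDist (pos (sv i k)) (pos (rq i (k + 1))) with hB
  -- weight of each intermediate matching
  have key : ∀ i < m, ∑ e ∈ M (i+1), symW pos e = (∑ e ∈ M i, symW pos e) + A i - B i := by
    intro i hi
    set R : Finset (Sym2 V) := (range (ℓ i)).image fun k => Sym2.mk (rq i k) (sv i k) with hR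
    set S : Finset (Sym2 V) := (range (ℓ i - 1)).image fun k => Sym2.mk (sv i k) (rq i (k+1))
      with hS
    have hRM : ∀ e ∈ R, e ∉ M i := by
      intro e he
      rw [hR, mem_image] at he
      obtain ⟨k, hk, rfl⟩ := he
      exact haug1 i hi k (mem_range.mp hk)
    have hSM : S ⊆ M i := by
      intro e he
      rw [hS, mem_image] at he
      obtain ⟨k, hk, rfl⟩ := he
      have : k + 1 < ℓ i := by have := mem_range.mp hk; omega
      exact haug2 i hi k this
    have hEMi : E i \ M i = R := by
      rw [hE i hi]
      ext e
      simp only [mem_sdiff, mem_union]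
      constructor
      · rintro ⟨h1 | h1, h2⟩
        · exact h1
        · exact absurd (hSM h1) h2
      · intro h; exact ⟨Or.inl h, hRM e h⟩
    have hMiE : M i ∩ E i = S := by
      rw [hE i hi]
      ext e
      simp only [mem_inter, mem_union]
      constructor
      · rintro ⟨h2, h1 | h1⟩
        · exact absurd h2 (hRM e h1)
        · exact h1
      · intro h; exact ⟨hSM h, Or.inr h⟩
    have hsumR : ∑ e ∈ R, symW pos e = A i := by
      rw [hR, sum_image]
      · rfl
      · intro k hk k' hk' h
        rw [Sym2.eq_iff] at h
        rcases h with ⟨h1, _⟩ | ⟨h1, _⟩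
        · exact (hdist i hi k (mem_range.mp hk) k' (mem_range.mp hk')).1 h1
        · exact absurd h1 (hdist i hi k (mem_range.mp hk) k' (mem_range.mp hk')).2.2
    have hsumS : ∑ e ∈ S, symW pos e = B i := by
      rw [hS, sum_image]
      · rfl
      · intro k hk k' hk' h
        have hk1 : k < ℓ i := by have := mem_range.mp hk; omega
        have hk1' : k + 1 < ℓ i := by have := mem_range.mp hk; omega
        have hk2 : k' < ℓ i := by have := mem_range.mp hk'; omega
        have hk2' : k' + 1 < ℓ i := by have := mem_range.mp hk'; omega
        rw [Sym2.eq_iff] at h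
        rcases h with ⟨h1, _⟩ | ⟨h1, _⟩
        · exact (hdist i hi k hk1 k' hk2).2.1 h1
        · exact absurd h1.symm (hdist i hi (k'+1) hk2' k hk1).2.2
    have hdisj : Disjoint (M i \ E i) (E i \ M i) :=
      disjoint_sdiff_sdiff
    rw [hM i hi, sum_union hdisj, hEMi, hsumR]
    have hsplit := sum_inter_add_sum_sdiff (M i) (E i) (symW pos)
    rw [hMiE, hsumS] at hsplit
    linarith
  -- telescoping: weight of M j
  have tel : ∀ j ≤ m, ∑ e ∈ M j, symW pos e = ∑ i ∈ range j, (A i - B i) := by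
    intro j hj
    induction j with
    | zero => simp [hM0]
    | succ j ih =>
      rw [sum_range_succ, ← ih (by omega), key j (by omega)]
      ring
  have hBA : ∑ i ∈ range m, B i ≤ ∑ i ∈ range m, A i := by
    have h0 : 0 ≤ ∑ e ∈ M m, symW pos e := sum_nonneg fun e _ => symW_nonneg pos e
    rw [tel m le_rfl, sum_sub_distrib] at h0
    linarith
  have hAnn : 0 ≤ ∑ i ∈ range m, A i :=
    sum_nonneg fun i _ => sum_nonneg fun k _ => taDist_nonneg _ _
  -- endpoint bound per path
  have hend : ∀ i ∈ range m,
      taDist (pos (rq i 0)) (pos (sv i (ℓ i - 1))) ≤ A i + B i := by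
    intro i hi
    have h1 := hℓ i (mem_range.mp hi)
    have := path_tri (fun k => pos (rq i k)) (fun k => pos (sv i k)) (ℓ i - 1)
    have hℓeq : ℓ i - 1 + 1 = ℓ i := by omega
    rw [hℓeq] at this
    exact this
  calc ∑ i ∈ range m, taDist (pos (rq i 0)) (pos (sv i (ℓ i - 1)))
      ≤ ∑ i ∈ range m, (A i + B i) := sum_le_sum hend
    _ ≤ (2 / (γ - 1)) * ∑ i ∈ range m, (γ * A i - B i) := by
        rw [sum_add_distrib, sum_sub_distrib, ← mul_sum]
        have hγ1 : 0 < γ - 1 := by linarith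
        rw [mul_sub, div_mul_eq_mul_div, div_mul_eq_mul_div, ← sub_div, le_div_iff₀ hγ1]
        nlinarith [hBA, hAnn]
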